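/- arXiv:1103.4485 — 2 statements merged into one kernel-verified Lean document; each statement's English description precedes it below -/
import Mathlib

section
/- For a bisimplicial set S, the family of sets W̄S_p = {(t_{0,p},...,t_{p,0}) ∈ ∏_{m=0}^p S_{m,p-m} | d^v_0 t_{m,p-m} = d^h_{m+1} t_{m+1,p-m-1} for 0 ≤ m < p}, equipped with faces d_i(t_{0,p},...,t_{p,0}) = (d_i^v t_{0,p},...,d_i^v t_{i-1,p-i+1}, d_i^h t_{i+1,p-i-1},...,d_i^h t_{p,0}) and degeneracies s_i(t_{0,p},...,t_{p,0}) = (s_i^v t_{0,p},...,s_0^v t_{i,p-i}, s_i^h t_{i,p-i},...,s_i^h t_{p,0}), forms a simplicial set (the codiagonal or total complex W̄S). -/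
/-!
STATEMENT 0: The codiagonal (total complex) `W̄S` of a bisimplicial set `S`, with the
described simplices, faces and degeneracies, forms a simplicial set.
-/

open CategoryTheory Opposite

/-- A bisimplicial set (curried form): horizontal index outside, vertical inside. -/
abbrev BiSSet := SimplexCategoryᵒᵖ ⥤ SSet.{0}

namespace BiSSet

variable (S : BiSSet)

/-- The set `S_{p,q}` of `(p,q)`-simplices. -/
def obj2 (p q : ℕ) : Type :=
  (S.obj (op (SimplexCategory.mk p))).obj (op (SimplexCategory.mk q))

/-- The morphism `[m] ⟶ [n]` of the simplex category associated with a monotone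
function `f : ℕ → ℕ` (values truncated at `n`). -/
def arr (m n : ℕ) (f : ℕ → ℕ) (hf : Monotone f) :
    SimplexCategory.mk m ⟶ SimplexCategory.mk n :=
  SimplexCategory.mkHom ⟨fun a => ⟨min (f a.val) n, by omega⟩, fun a b hab => by
    have : f a.val ≤ f b.val := hf hab
    simp only [Fin.mk_le_mk]
    omega⟩

/-- Horizontal action of a simplicial operator. -/
def hAct {p p' q : ℕ} (f : SimplexCategory.mk p' ⟶ SimplexCategory.mk p) :
    S.obj2 p q → S.obj2 p' q := fun t => (S.map f.op).app _ t

/-- Vertical action of a simplicial operator. -/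
def vAct {p q q' : ℕ} (f : SimplexCategory.mk q' ⟶ SimplexCategory.mk q) :
    S.obj2 p q → S.obj2 p q' := fun t => (S.obj _).map f.op t

/-- The monotone function underlying the `i`-th coface. -/
def fc (i : ℕ) : ℕ → ℕ := fun a => if a < i then a else a + 1

/-- The monotone function underlying the `i`-th codegeneracy. -/
def dgm (i : ℕ) : ℕ → ℕ := fun a => if a ≤ i then a else a - 1

lemma fc_mono (i : ℕ) : Monotone (fc i) := fun a b h => by
  simp only [fc]; split <;> split <;> omega

lemma dgm_mono (i : ℕ) : Monotone (dgm i) := fun a b h => by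
  simp only [dgm]; split <;> split <;> omega

/-- `i`-th horizontal face operator `d_i^h` (with flexible dimensions). -/
def dh (i : ℕ) {p' p q : ℕ} : S.obj2 p q → S.obj2 p' q :=
  S.hAct (arr p' p (fc i) (fc_mono i))

/-- `i`-th vertical face operator `d_i^v` (with flexible dimensions). -/
def dv (i : ℕ) {p q' q : ℕ} : S.obj2 p q → S.obj2 p q' :=
  S.vAct (arr q' q (fc i) (fc_mono i))

/-- `i`-th horizontal degeneracy operator `s_i^h` (with flexible dimensions). -/
def sh (i : ℕ) {p' p q : ℕ} : S.obj2 p q → S.obj2 p' q :=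
  S.hAct (arr p' p (dgm i) (dgm_mono i))

/-- `i`-th vertical degeneracy operator `s_i^v` (with flexible dimensions). -/
def sv (i : ℕ) {p q' q : ℕ} : S.obj2 p q → S.obj2 p q' :=
  S.vAct (arr q' q (dgm i) (dgm_mono i))

/-- Transport of simplices along equalities of the dimensions. -/
def ocast {p q p' q' : ℕ} (hp : p = p') (hq : q = q') : S.obj2 p q → S.obj2 p' q' := by
  subst hp; subst hq; exact id

/-- The set of `p`-simplices of the codiagonal `W̄S`:
tuples `(t_{0,p}, …, t_{p,0}) ∈ ∏ₘ S_{m,p-m}` with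
`d₀^v t_{m,p-m} = d_{m+1}^h t_{m+1,p-m-1}` for `0 ≤ m < p`. -/
def Wbar (p : ℕ) : Type :=
  { t : ∀ m : Fin (p + 1), S.obj2 m.val (p - m.val) //
    ∀ m : Fin p, S.dv 0 (t m.castSucc) = S.dh (m.val + 1) (t m.succ) }

/-- The `i`-th face of a `(p+1)`-simplex of `W̄S`:
`d_i (t_{0,p+1}, …, t_{p+1,0}) = (d_i^v t_{0,p+1}, …, d_i^v t_{i-1,p-i+2},
d_i^h t_{i+1,p-i}, …, d_i^h t_{p+1,0})` (vertical operators suitably indexed). -/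
def wFaceTuple {p : ℕ} (i : ℕ) (t : S.Wbar (p + 1)) (m : Fin (p + 1)) :
    S.obj2 m.val (p - m.val) :=
  if h : m.val < i then S.dv (i - m.val) (t.1 ⟨m.val, by omega⟩)
  else S.ocast rfl (show p + 1 - (m.val + 1) = p - m.val by omega)
    (S.dh i (t.1 ⟨m.val + 1, by omega⟩))

/-- The `i`-th degeneracy of a `p`-simplex of `W̄S`:
`s_i (t_{0,p}, …, t_{p,0}) = (s_i^v t_{0,p}, …, s_0^v t_{i,p-i},
s_i^h t_{i,p-i}, …, s_i^h t_{p,0})` (vertical operators suitably indexed). -/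
def wDegTuple {p : ℕ} (i : ℕ) (hi : i ≤ p) (t : S.Wbar p) (m : Fin (p + 2)) :
    S.obj2 m.val (p + 1 - m.val) :=
  if h : m.val ≤ i then S.sv (i - m.val) (t.1 ⟨m.val, by omega⟩)
  else S.ocast rfl (show p - (m.val - 1) = p + 1 - m.val by omega)
    (S.sh i (t.1 ⟨m.val - 1, by omega⟩))

/-! ### Auxiliary development -/

open SimplexCategory in
lemma homext {m n : ℕ} {f g : SimplexCategory.mk m ⟶ SimplexCategory.mk n}
    (h : ∀ i : Fin (m + 1), ((f.toOrderHom i).val = (g.toOrderHom i).val)) : f = g :=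
  SimplexCategory.Hom.ext _ _ (OrderHom.ext _ _ (funext fun i => Fin.ext (h i)))

lemma arr_val {m n : ℕ} (f : ℕ → ℕ) (hf : Monotone f) (i : Fin (m + 1)) :
    (((arr m n f hf).toOrderHom) i).val = min (f i.val) n := by
  simp [arr, SimplexCategory.mkHom]; rfl

lemma comp_val {a b c : ℕ} (f : SimplexCategory.mk a ⟶ SimplexCategory.mk b)
    (g : SimplexCategory.mk b ⟶ SimplexCategory.mk c) (i : Fin (a + 1)) :
    ((f ≫ g).toOrderHom i).val = (g.toOrderHom (f.toOrderHom i)).val := by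
  simp

lemma ocast_rfl {p q : ℕ} (x : S.obj2 p q) : S.ocast rfl rfl x = x := rfl

lemma hAct_id {p q : ℕ} (x : S.obj2 p q) : S.hAct (𝟙 _) x = x := by
  show (S.map (𝟙 _).op).app _ x = x
  rw [op_id, S.map_id]; rfl

lemma vAct_id {p q : ℕ} (x : S.obj2 p q) : S.vAct (𝟙 _) x = x := by
  show (S.obj _).map (𝟙 _).op x = x
  rw [op_id]; exact FunctorToTypes.map_id_apply _ x

lemma hAct_hAct {p₁ p₂ p₃ q : ℕ} (f : SimplexCategory.mk p₁ ⟶ SimplexCategory.mk p₂)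
    (g : SimplexCategory.mk p₂ ⟶ SimplexCategory.mk p₃) (x : S.obj2 p₃ q) :
    S.hAct f (S.hAct g x) = S.hAct (f ≫ g) x := by
  show _ = (S.map (f ≫ g).op).app _ x
  rw [op_comp, S.map_comp]; rfl

lemma vAct_vAct {p q₁ q₂ q₃ : ℕ} (f : SimplexCategory.mk q₁ ⟶ SimplexCategory.mk q₂)
    (g : SimplexCategory.mk q₂ ⟶ SimplexCategory.mk q₃) (x : S.obj2 p q₃) :
    S.vAct f (S.vAct g x) = S.vAct (f ≫ g) x := by
  show _ = (S.obj _).map (f ≫ g).op x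
  rw [op_comp]; exact (FunctorToTypes.map_comp_apply _ _ _ x).symm

lemma hAct_vAct {p p' q q' : ℕ} (f : SimplexCategory.mk p' ⟶ SimplexCategory.mk p)
    (g : SimplexCategory.mk q' ⟶ SimplexCategory.mk q) (x : S.obj2 p q) :
    S.hAct f (S.vAct g x) = S.vAct g (S.hAct f x) :=
  NatTrans.naturality_apply (S.map f.op) g.op x

lemma hAct_ocast {p p' q q' : ℕ} (f : SimplexCategory.mk p' ⟶ SimplexCategory.mk p)
    (hq : q = q') (x : S.obj2 p q) :
    S.hAct f (S.ocast rfl hq x) = S.ocast rfl hq (S.hAct f x) := by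
  subst hq; rfl

/-- Inclusion `[k] → [k']` (identity values). -/
def ιh (k k' : ℕ) (h : k ≤ k') : SimplexCategory.mk k ⟶ SimplexCategory.mk k' :=
  SimplexCategory.mkHom ⟨fun i => ⟨i.val, by have := i.isLt; omega⟩, fun a b hab => by
    simp only [Fin.mk_le_mk]; exact hab⟩

lemma ιh_val (k k' : ℕ) (h : k ≤ k') (i : Fin (k + 1)) :
    (((ιh k k' h).toOrderHom) i).val = i.val := by
  simp [ιh, SimplexCategory.mkHom]; rfl

/-- Shift `[q'] → [q]`, `i ↦ i + d`. -/
def shv (d q' q : ℕ) (h : q' + d ≤ q) : SimplexCategory.mk q' ⟶ SimplexCategory.mk q :=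
  SimplexCategory.mkHom ⟨fun i => ⟨i.val + d, by have := i.isLt; omega⟩, fun a b hab => by
    simp only [Fin.mk_le_mk]
    have : a.val ≤ b.val := hab
    omega⟩

lemma shv_val (d q' q : ℕ) (h : q' + d ≤ q) (i : Fin (q' + 1)) :
    (((shv d q' q h).toOrderHom) i).val = i.val + d := by
  simp [shv, SimplexCategory.mkHom]; rfl

lemma hAct_idlike {p q : ℕ} (g : SimplexCategory.mk p ⟶ SimplexCategory.mk p)
    (hg : ∀ i, ((g.toOrderHom i).val = i.val)) (x : S.obj2 p q) : S.hAct g x = x := by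
  rw [show g = 𝟙 _ from homext fun i => by rw [hg]; rfl]
  exact S.hAct_id x

lemma vAct_idlike {p q : ℕ} (g : SimplexCategory.mk q ⟶ SimplexCategory.mk q)
    (hg : ∀ i, ((g.toOrderHom i).val = i.val)) (x : S.obj2 p q) : S.vAct g x = x := by
  rw [show g = 𝟙 _ from homext fun i => by rw [hg]; rfl]
  exact S.vAct_id x

lemma vAct_ιh_ocast {p q q' : ℕ} (hle : q' ≤ q) (h : q = q') (x : S.obj2 p q) :
    S.vAct (ιh q' q hle) x = S.ocast rfl h x := by
  subst h
  rw [S.vAct_idlike (ιh q q hle) (fun i => ιh_val q q hle i) x]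
  rfl

/-- The underlying `ℕ`-valued function of a simplicial operator. -/
def nfun {m n : ℕ} (α : SimplexCategory.mk m ⟶ SimplexCategory.mk n) : ℕ → ℕ :=
  fun a => (α.toOrderHom ⟨min a m, by simp only [SimplexCategory.len_mk]; omega⟩).val

lemma nfun_le {m n : ℕ} (α : SimplexCategory.mk m ⟶ SimplexCategory.mk n) (a : ℕ) :
    nfun α a ≤ n := by
  have := (α.toOrderHom ⟨min a m, by simp only [SimplexCategory.len_mk]; omega⟩).isLt
  simpa [nfun] using Nat.lt_succ_iff.mp this

lemma nfun_mono {m n : ℕ} (α : SimplexCategory.mk m ⟶ SimplexCategory.mk n) {a b : ℕ}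
    (h : a ≤ b) : nfun α a ≤ nfun α b :=
  α.toOrderHom.monotone (by simp only [SimplexCategory.len_mk, Fin.mk_le_mk]; omega)

lemma nfun_val {m n : ℕ} (α : SimplexCategory.mk m ⟶ SimplexCategory.mk n) {a : ℕ}
    (ha : a ≤ m) : nfun α a = (α.toOrderHom ⟨a, by simp only [SimplexCategory.len_mk]; omega⟩).val := by
  unfold nfun
  exact congrArg (fun z => (α.toOrderHom z).val) (Fin.ext (by simp; omega))

lemma nfun_comp {m₁ m₂ m₃ : ℕ} (u : SimplexCategory.mk m₁ ⟶ SimplexCategory.mk m₂)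
    (v : SimplexCategory.mk m₂ ⟶ SimplexCategory.mk m₃) (a : ℕ) (ha : a ≤ m₁) :
    nfun (u ≫ v) a = nfun v (nfun u a) := by
  rw [nfun_val _ ha, nfun_val v (nfun_le u a), comp_val]
  exact congrArg (fun z => (v.toOrderHom z).val) (Fin.ext (by rw [← nfun_val u ha]))

/-- Head part of `α` at `j`. -/
def hd {m n : ℕ} (α : SimplexCategory.mk m ⟶ SimplexCategory.mk n) (j : ℕ) :
    SimplexCategory.mk j ⟶ SimplexCategory.mk (nfun α j) :=
  arr j (nfun α j) (nfun α) (fun a b h => nfun_mono α h)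

/-- Tail part of `α` at `j`. -/
def tl {m n : ℕ} (α : SimplexCategory.mk m ⟶ SimplexCategory.mk n) (j : ℕ) :
    SimplexCategory.mk (m - j) ⟶ SimplexCategory.mk (n - nfun α j) :=
  arr (m - j) (n - nfun α j) (fun a => nfun α (j + a) - nfun α j)
    (fun a b h => Nat.sub_le_sub_right (nfun_mono α (by omega)) _)

/-- Component of the action of `α` on `W̄S`. -/
def mapTuple {m n : ℕ} (α : SimplexCategory.mk m ⟶ SimplexCategory.mk n) (t : S.Wbar n)
    (j : Fin (m + 1)) : S.obj2 j.val (m - j.val) :=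
  S.hAct (hd α j.val) (S.vAct (tl α j.val) (t.1 ⟨nfun α j.val, Nat.lt_succ_of_le (nfun_le α j.val)⟩))

lemma mapTuple_eq {m n : ℕ} (α : SimplexCategory.mk m ⟶ SimplexCategory.mk n) (t : S.Wbar n)
    (j : Fin (m + 1)) {k : ℕ} (hak : nfun α j.val = k) (hk : k ≤ n)
    (f : SimplexCategory.mk j.val ⟶ SimplexCategory.mk k)
    (g : SimplexCategory.mk (m - j.val) ⟶ SimplexCategory.mk (n - k))
    (hf : ∀ i : Fin (j.val + 1), ((f.toOrderHom i).val = nfun α i.val))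
    (hg : ∀ i : Fin (m - j.val + 1), ((g.toOrderHom i).val = nfun α (j.val + i.val) - k)) :
    S.mapTuple α t j = S.hAct f (S.vAct g (t.1 ⟨k, by omega⟩)) := by
  subst hak
  have hfd : hd α j.val = f := homext fun i => by
    rw [hf i]
    unfold hd
    refine (arr_val (m := j.val) (n := nfun α j.val) (nfun α) _ i).trans ?_
    have h1 : nfun α i.val ≤ nfun α j.val := nfun_mono α (by have := i.isLt; omega)
    omega
  have hgd : tl α j.val = g := homext fun i => by
    rw [hg i]
    unfold tl
    refine (arr_val (m := m - j.val) (n := n - nfun α j.val)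
      (fun a => nfun α (j.val + a) - nfun α j.val) _ i).trans ?_
    have h1 : nfun α (j.val + i.val) ≤ n := nfun_le α _
    omega
  rw [mapTuple, hfd, hgd]

lemma hd_val {m n : ℕ} (α : SimplexCategory.mk m ⟶ SimplexCategory.mk n) (j : ℕ)
    (i : Fin (j + 1)) : ((hd α j).toOrderHom i).val = min (nfun α i.val) (nfun α j) := by
  unfold hd; exact arr_val _ _ i

lemma tl_val {m n : ℕ} (α : SimplexCategory.mk m ⟶ SimplexCategory.mk n) (j : ℕ)
    (i : Fin (m - j + 1)) :
    ((tl α j).toOrderHom i).val = min (nfun α (j + i.val) - nfun α j) (n - nfun α j) := by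
  unfold tl; exact arr_val _ _ i

lemma star {n : ℕ} (t : S.Wbar n) (d : ℕ) :
    ∀ (k k' : ℕ) (hkd : k' = k + d) (hk : k' ≤ n),
      S.vAct (shv (k' - k) (n - k') (n - k) (by omega)) (t.1 ⟨k, by omega⟩)
        = S.hAct (ιh k k' (by omega)) (t.1 ⟨k', by omega⟩) := by
  induction d with
  | zero =>
    intro k k' hd hk
    have hkk : k' = k := by omega
    subst hkk
    rw [S.vAct_idlike (shv (k' - k') (n - k') (n - k') (by omega))
        (fun i => by rw [shv_val]; omega) _,
      S.hAct_idlike (ιh k' k' (by omega)) (fun i => ιh_val _ _ _ i) _]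
  | succ d ih =>
    intro k k' hdd hk
    have hkk : k < k' := by omega
    have hcond : S.vAct (arr (n - (k+1)) (n - k) (fc 0) (fc_mono 0)) (t.1 ⟨k, by omega⟩)
        = S.hAct (arr k (k+1) (fc (k+1)) (fc_mono (k+1))) (t.1 ⟨k+1, by omega⟩) :=
      t.2 ⟨k, by omega⟩
    have hdec : shv (k' - k) (n - k') (n - k) (by omega)
        = shv (k' - (k+1)) (n - k') (n - (k+1)) (by omega)
            ≫ arr (n - (k+1)) (n - k) (fc 0) (fc_mono 0) := homext fun i => by
      have hi : i.val < n - k' + 1 := i.isLt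
      rw [shv_val, comp_val, arr_val, shv_val]
      simp only [fc]
      split <;> omega
    rw [hdec, ← S.vAct_vAct, hcond, ← S.hAct_vAct,
      ih (k+1) k' (by omega) hk, S.hAct_hAct]
    rw [show (arr k (k+1) (fc (k+1)) (fc_mono (k+1)) ≫ ιh (k+1) k' (by omega))
        = ιh k k' (by omega) from homext fun i => by
      have hi : i.val < k + 1 := i.isLt
      rw [comp_val, ιh_val, ιh_val, arr_val]
      simp only [fc]
      split <;> omega]

/-- The action of a simplicial operator on `W̄S`. -/
def wmap {m n : ℕ} (α : SimplexCategory.mk m ⟶ SimplexCategory.mk n) (t : S.Wbar n) :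
    S.Wbar m :=
  ⟨fun j => S.mapTuple α t j, by
    intro j
    have hjm : j.val < m := j.isLt
    have ha : nfun α j.val ≤ nfun α (j.val + 1) := nfun_mono α (by omega)
    have han : nfun α (j.val + 1) ≤ n := nfun_le α _
    show S.vAct (arr (m - (j.val+1)) (m - j.val) (fc 0) (fc_mono 0))
          (S.mapTuple α t ⟨j.val, by omega⟩)
        = S.hAct (arr j.val (j.val+1) (fc (j.val+1)) (fc_mono (j.val+1)))
          (S.mapTuple α t ⟨j.val+1, by omega⟩)
    simp only [mapTuple]
    have hsplit : arr (m - (j.val+1)) (m - j.val) (fc 0) (fc_mono 0) ≫ tl α j.val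
        = tl α (j.val+1) ≫ shv (nfun α (j.val+1) - nfun α j.val) (n - nfun α (j.val+1))
            (n - nfun α j.val) (by omega) := homext fun i => by
      have hi : i.val < m - (j.val+1) + 1 := i.isLt
      rw [comp_val, tl_val, arr_val, comp_val, shv_val, tl_val]
      have e0 : min (fc 0 i.val) (m - j.val) = i.val + 1 := by
        simp only [fc]; split <;> omega
      rw [e0, show j.val + (i.val + 1) = j.val + 1 + i.val from by omega]
      have h1 : nfun α (j.val + 1) ≤ nfun α (j.val + 1 + i.val) := nfun_mono α (by omega)
      have h2 : nfun α (j.val + 1 + i.val) ≤ n := nfun_le α _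
      omega
    rw [← S.hAct_vAct, S.vAct_vAct, hsplit, ← S.vAct_vAct,
      S.star t (nfun α (j.val+1) - nfun α j.val) (nfun α j.val) (nfun α (j.val+1))
        (by omega) han,
      ← S.hAct_vAct, S.hAct_hAct, S.hAct_hAct]
    congr 1
    apply homext
    intro i
    have hi : i.val < j.val + 1 := i.isLt
    rw [comp_val, comp_val, ιh_val, hd_val, hd_val, arr_val]
    have e : min (fc (j.val+1) i.val) (j.val+1) = i.val := by
      simp only [fc]; split <;> omega
    rw [e]
    have h1 : nfun α i.val ≤ nfun α j.val := nfun_mono α (by omega)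
    omega⟩

lemma wmap_id {n : ℕ} (t : S.Wbar n) : S.wmap (𝟙 (SimplexCategory.mk n)) t = t := by
  apply Subtype.ext
  funext j
  have hj : j.val ≤ n := by have := j.isLt; omega
  have hid : ∀ a : ℕ, a ≤ n → nfun (𝟙 (SimplexCategory.mk n)) a = a := by
    intro a haa
    rw [nfun_val _ haa]
    simp
  show S.mapTuple (𝟙 (SimplexCategory.mk n)) t j = t.1 j
  rw [S.mapTuple_eq (𝟙 _) t j (hid j.val hj) hj (ιh j.val j.val le_rfl)
      (ιh (n - j.val) (n - j.val) le_rfl)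
      (fun i => by rw [ιh_val, hid i.val (by have := i.isLt; omega)])
      (fun i => by rw [ιh_val, hid (j.val + i.val) (by have := i.isLt; omega)]; omega)]
  rw [S.hAct_idlike (ιh j.val j.val le_rfl) (fun i => ιh_val _ _ _ i),
    S.vAct_idlike (ιh (n - j.val) (n - j.val) le_rfl) (fun i => ιh_val _ _ _ i)]

lemma wmap_comp {m₁ m₂ m₃ : ℕ} (u : SimplexCategory.mk m₁ ⟶ SimplexCategory.mk m₂)
    (v : SimplexCategory.mk m₂ ⟶ SimplexCategory.mk m₃) (t : S.Wbar m₃) :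
    S.wmap (u ≫ v) t = S.wmap u (S.wmap v t) := by
  apply Subtype.ext
  funext j
  have hj : j.val ≤ m₁ := by have := j.isLt; omega
  have hle1 : nfun u j.val ≤ m₂ := nfun_le u _
  have hle2 : nfun v (nfun u j.val) ≤ m₃ := nfun_le v _
  show S.mapTuple (u ≫ v) t j
      = S.hAct (hd u j.val) (S.vAct (tl u j.val)
          (S.hAct (hd v (nfun u j.val)) (S.vAct (tl v (nfun u j.val))
            (t.1 ⟨nfun v (nfun u j.val), by omega⟩))))
  rw [S.mapTuple_eq (u ≫ v) t j (nfun_comp u v j.val hj) (nfun_le v _)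
      (hd u j.val ≫ hd v (nfun u j.val)) (tl u j.val ≫ tl v (nfun u j.val)) ?hf ?hg]
  rw [← S.hAct_hAct, ← S.vAct_vAct, S.hAct_vAct (hd v (nfun u j.val)) (tl u j.val)]
  case hf =>
    intro i
    have hi : i.val ≤ j.val := by have := i.isLt; omega
    rw [comp_val, hd_val, hd_val, nfun_comp u v i.val (by omega)]
    have h1 : nfun u i.val ≤ nfun u j.val := nfun_mono u (by omega)
    rw [show min (nfun u i.val) (nfun u j.val) = nfun u i.val from by omega]
    have h2 : nfun v (nfun u i.val) ≤ nfun v (nfun u j.val) := nfun_mono v h1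
    omega
  case hg =>
    intro i
    have hi : i.val ≤ m₁ - j.val := by have := i.isLt; omega
    rw [comp_val, tl_val, tl_val, nfun_comp u v (j.val + i.val) (by omega)]
    have h1 : nfun u j.val ≤ nfun u (j.val + i.val) := nfun_mono u (by omega)
    have h2 : nfun u (j.val + i.val) ≤ m₂ := nfun_le u _
    rw [show min (nfun u (j.val + i.val) - nfun u j.val) (m₂ - nfun u j.val)
        = nfun u (j.val + i.val) - nfun u j.val from by omega]
    rw [show nfun u j.val + (nfun u (j.val + i.val) - nfun u j.val)
        = nfun u (j.val + i.val) from by omega]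
    have h3 : nfun v (nfun u j.val) ≤ nfun v (nfun u (j.val + i.val)) := nfun_mono v h1
    have h4 : nfun v (nfun u (j.val + i.val)) ≤ m₃ := nfun_le v _
    omega

/-- The codiagonal as a simplicial set. -/
def W : SSet.{0} where
  obj X := S.Wbar X.unop.len
  map {X Y} f := TypeCat.ofHom (S.wmap (m := Y.unop.len) (n := X.unop.len) f.unop)
  map_id X := by refine ConcreteCategory.hom_ext _ _ fun t => ?_; exact S.wmap_id t
  map_comp {X Y Z} f g := by refine ConcreteCategory.hom_ext _ _ fun t => ?_; exact S.wmap_comp (m₁ := Z.unop.len) (m₂ := Y.unop.len) (m₃ := X.unop.len) g.unop f.unop t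

lemma nfun_δ {p : ℕ} (i : Fin (p + 2)) {a : ℕ} (ha : a ≤ p) :
    nfun (SimplexCategory.δ i) a = if a < i.val then a else a + 1 := by
  rw [nfun_val _ ha]
  show (Fin.succAbove i ⟨a, by omega⟩).val = _
  unfold Fin.succAbove
  by_cases h : a < i.val
  · rw [if_pos (show Fin.castSucc ⟨a, by omega⟩ < i from by rw [Fin.lt_def]; simpa using h),
      if_pos h]
    simp
  · rw [if_neg (show ¬ Fin.castSucc ⟨a, by omega⟩ < i from by rw [Fin.lt_def]; simpa using h),
      if_neg h]
    simp

lemma nfun_σ {p : ℕ} (i : Fin (p + 1)) {a : ℕ} (ha : a ≤ p + 1) :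
    nfun (SimplexCategory.σ i) a = if a ≤ i.val then a else a - 1 := by
  rw [nfun_val _ ha]
  show (Fin.predAbove i ⟨a, by omega⟩).val = _
  unfold Fin.predAbove
  by_cases h : i.val < a
  · rw [dif_pos (show Fin.castSucc i < ⟨a, by omega⟩ from by rw [Fin.lt_def]; simpa using h),
      if_neg (by omega)]
    simp
  · rw [dif_neg (show ¬ Fin.castSucc i < ⟨a, by omega⟩ from by rw [Fin.lt_def]; simpa using h),
      if_pos (by omega)]
    simp
end BiSSet

/-- For a bisimplicial set `S`, the family `W̄S_p`, equipped with the
described faces and degeneracies, forms a simplicial set: there is a simplicial set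
whose `p`-simplices are naturally identified with `W̄S_p`, and whose face and degeneracy
operators are given by the described formulas. -/
theorem wbar_forms_simplicial_set (S : BiSSet) :
    ∃ (W : SSet.{0}) (e : ∀ p : ℕ, W.obj (op (SimplexCategory.mk p)) ≃ S.Wbar p),
      (∀ (p : ℕ) (i : Fin (p + 2)) (x : W.obj (op (SimplexCategory.mk (p + 1)))),
        ((e p) (W.map (SimplexCategory.δ i).op x)).1 =
          S.wFaceTuple i.val (e (p + 1) x)) ∧
      (∀ (p : ℕ) (i : Fin (p + 1)) (x : W.obj (op (SimplexCategory.mk p))),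
        ((e (p + 1)) (W.map (SimplexCategory.σ i).op x)).1 =
          S.wDegTuple i.val i.is_le (e p x)) := by
  classical
  refine ⟨S.W, fun p => Equiv.refl _, ?_, ?_⟩
  · intro p i x
    funext j
    show S.mapTuple (SimplexCategory.δ i) x j = S.wFaceTuple i.val x j
    have hj : j.val ≤ p := by have := j.isLt; omega
    have hip : i.val ≤ p + 1 := by have := i.isLt; omega
    unfold BiSSet.wFaceTuple
    by_cases h : j.val < i.val
    · rw [dif_pos h]
      rw [S.mapTuple_eq (SimplexCategory.δ i) x j (k := j.val)
          (by rw [BiSSet.nfun_δ i hj, if_pos h]) (by omega) (BiSSet.ιh j.val j.val le_rfl)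
          (BiSSet.arr (p - j.val) (p + 1 - j.val) (BiSSet.fc (i.val - j.val)) (BiSSet.fc_mono _)) ?_ ?_]
      · rw [S.hAct_idlike (BiSSet.ιh j.val j.val le_rfl) (fun i' => BiSSet.ιh_val _ _ _ i')]
        rfl
      · intro i'
        have hi' : i'.val < j.val + 1 := i'.isLt
        rw [BiSSet.ιh_val, BiSSet.nfun_δ i (by omega), if_pos (by omega)]
      · intro i'
        have hi' : i'.val < p - j.val + 1 := i'.isLt
        rw [BiSSet.arr_val, BiSSet.nfun_δ i (by omega)]
        simp only [BiSSet.fc]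
        split_ifs <;> omega
    · rw [dif_neg h]
      rw [S.mapTuple_eq (SimplexCategory.δ i) x j (k := j.val + 1)
          (by rw [BiSSet.nfun_δ i hj, if_neg h]) (by omega)
          (BiSSet.arr j.val (j.val + 1) (BiSSet.fc i.val) (BiSSet.fc_mono _))
          (BiSSet.ιh (p - j.val) (p + 1 - (j.val + 1)) (by omega)) ?_ ?_]
      · rw [S.vAct_ιh_ocast (by omega) (by omega) _, S.hAct_ocast]
        rfl
      · intro i'
        have hi' : i'.val < j.val + 1 := i'.isLt
        rw [BiSSet.arr_val, BiSSet.nfun_δ i (by omega)]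
        simp only [BiSSet.fc]
        split_ifs <;> omega
      · intro i'
        have hi' : i'.val < p - j.val + 1 := i'.isLt
        rw [BiSSet.ιh_val, BiSSet.nfun_δ i (by omega), if_neg (by omega)]
        omega
  · intro p i x
    funext j
    show S.mapTuple (SimplexCategory.σ i) x j = S.wDegTuple i.val i.is_le x j
    have hj : j.val ≤ p + 1 := by have := j.isLt; omega
    have hip : i.val ≤ p := i.is_le
    unfold BiSSet.wDegTuple
    by_cases h : j.val ≤ i.val
    · rw [dif_pos h]
      rw [S.mapTuple_eq (SimplexCategory.σ i) x j (k := j.val)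
          (by rw [BiSSet.nfun_σ i hj, if_pos h]) (by omega) (BiSSet.ιh j.val j.val le_rfl)
          (BiSSet.arr (p + 1 - j.val) (p - j.val) (BiSSet.dgm (i.val - j.val)) (BiSSet.dgm_mono _)) ?_ ?_]
      · rw [S.hAct_idlike (BiSSet.ιh j.val j.val le_rfl) (fun i' => BiSSet.ιh_val _ _ _ i')]
        rfl
      · intro i'
        have hi' : i'.val < j.val + 1 := i'.isLt
        rw [BiSSet.ιh_val, BiSSet.nfun_σ i (by omega), if_pos (by omega)]
      · intro i'
        have hi' : i'.val < p + 1 - j.val + 1 := i'.isLt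
        rw [BiSSet.arr_val, BiSSet.nfun_σ i (by omega)]
        simp only [BiSSet.dgm]
        split_ifs <;> omega
    · rw [dif_neg h]
      rw [S.mapTuple_eq (SimplexCategory.σ i) x j (k := j.val - 1)
          (by rw [BiSSet.nfun_σ i hj, if_neg h]) (by omega)
          (BiSSet.arr j.val (j.val - 1) (BiSSet.dgm i.val) (BiSSet.dgm_mono _))
          (BiSSet.ιh (p + 1 - j.val) (p - (j.val - 1)) (by omega)) ?_ ?_]
      · rw [S.vAct_ιh_ocast (by omega) (by omega) _, S.hAct_ocast]
        rfl
      · intro i'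
        have hi' : i'.val < j.val + 1 := i'.isLt
        rw [BiSSet.arr_val, BiSSet.nfun_σ i (by omega)]
        simp only [BiSSet.dgm]
        split_ifs <;> omega
      · intro i'
        have hi' : i'.val < p + 1 - j.val + 1 := i'.isLt
        rw [BiSSet.ιh_val, BiSSet.nfun_σ i (by omega), if_neg (by omega)]
        omega
end

section
/- Let M: I^op → MonCat be a diagram of monoidal categories, with (a: j → i) ↦ (a*: M_i → M_j). The nerve of the diagram, Ner_I M: [n] ↦ ∐_{G:[n]→I} Z²([n], M∘G), where Z²([n], M∘G) is the set of 2-cocycles of [n] with coefficients in M∘G, is a well-defined simplicial set. -/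
/-!
STATEMENT 7: For a diagram of monoidal categories `M : Iᵒᵖ → MonCat`, the nerve of the
diagram `Ner_I M : [n] ↦ ∐_{G : [n] → I} Z²([n], M ∘ G)` is a well-defined simplicial
set.  A functor `G : [n] → I` (with `[n]` the ordinal category with an arrow `j → i`
for `i ≤ j`) is encoded as a functor `Fin (n+1) ⥤ Iᵒᵖ`; the diagram of monoidal
categories is encoded as a functor `M : Iᵒᵖ ⥤ Cat` each of whose values is monoidal
and each of whose transition functors is (strong) monoidal.
-/

open CategoryTheory Opposite MonoidalCategory

variable {I : Type} [SmallCategory I]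

/-- For a diagram `M` of monoidal categories indexed by `Iᵒᵖ` and a functor
`G : [n] → I` (encoded as `Fin (n+1) ⥤ Iᵒᵖ`), the composite of transition functors
along `i ≤ j ≤ k` agrees, on objects, with the transition functor of `i ≤ k`. -/
lemma tfun_comp_obj (M : Iᵒᵖ ⥤ Cat.{0, 0}) {n : ℕ} (G : Fin (n + 1) ⥤ Iᵒᵖ)
    {i j k : Fin (n + 1)} (hij : i ≤ j) (hjk : j ≤ k) (X : M.obj (G.obj i)) :
    (M.map (G.map (homOfLE hjk))).toFunctor.obj ((M.map (G.map (homOfLE hij))).toFunctor.obj X) =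
      (M.map (G.map (homOfLE (hij.trans hjk)))).toFunctor.obj X := by
  rw [← homOfLE_comp hij hjk, G.map_comp, M.map_comp]
  rfl

/-- The transition functor of `i ≤ i` is the identity on objects. -/
lemma tfun_refl_obj (M : Iᵒᵖ ⥤ Cat.{0, 0}) {n : ℕ} (G : Fin (n + 1) ⥤ Iᵒᵖ)
    (i : Fin (n + 1)) (X : M.obj (G.obj i)) :
    (M.map (G.map (homOfLE (le_refl i)))).toFunctor.obj X = X := by
  have h : homOfLE (le_refl i) = 𝟙 i := rfl
  rw [h, G.map_id, M.map_id]
  rfl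

/-- A 2-cocycle of `[n]` with coefficients in the diagram of monoidal categories
`M ∘ G`. -/
structure TwoCocycle (M : Iᵒᵖ ⥤ Cat.{0, 0}) [∀ x, MonoidalCategory (M.obj x)]
    [∀ (x y : Iᵒᵖ) (f : x ⟶ y), (M.map f).toFunctor.Monoidal]
    {n : ℕ} (G : Fin (n + 1) ⥤ Iᵒᵖ) where
  /-- the object `Y_a ∈ M_j` associated with each arrow `a : j → i` -/
  Y : ∀ {i j : Fin (n + 1)}, i ≤ j → M.obj (G.obj j)
  /-- the morphism `f_{a,b} : b^*Y_a ⊗ Y_b ⟶ Y_{ab}` -/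
  f : ∀ {i j k : Fin (n + 1)} (hij : i ≤ j) (hjk : j ≤ k),
    ((M.map (G.map (homOfLE hjk))).toFunctor.obj (Y hij) ⊗ Y hjk) ⟶ Y (hij.trans hjk)
  /-- normalization: `Y_{1_j} = I` -/
  Y_unit : ∀ i : Fin (n + 1), Y (le_refl i) = 𝟙_ (M.obj (G.obj i))
  /-- `f_{a,1}` is the canonical isomorphism -/
  f_right : ∀ {i j : Fin (n + 1)} (hij : i ≤ j),
    f hij (le_refl j) =
      eqToHom (by rw [tfun_refl_obj, Y_unit]) ≫ (ρ_ (Y hij)).hom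
  /-- `f_{1,a}` is the canonical isomorphism -/
  f_left : ∀ {i j : Fin (n + 1)} (hij : i ≤ j),
    f (le_refl i) hij =
      ((eqToHom (congrArg (M.map (G.map (homOfLE hij))).toFunctor.obj (Y_unit i)) ≫
        Functor.OplaxMonoidal.η (M.map (G.map (homOfLE hij))).toFunctor) ▷ Y hij) ≫
        (λ_ (Y hij)).hom
  /-- the cocycle coherence condition -/
  coh : ∀ {i j k l : Fin (n + 1)} (hij : i ≤ j) (hjk : j ≤ k) (hkl : k ≤ l),
    (Functor.LaxMonoidal.μ (M.map (G.map (homOfLE hkl))).toFunctor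
        ((M.map (G.map (homOfLE hjk))).toFunctor.obj (Y hij)) (Y hjk) ▷ Y hkl) ≫
      ((M.map (G.map (homOfLE hkl))).toFunctor.map (f hij hjk) ▷ Y hkl) ≫
      f (hij.trans hjk) hkl =
    (α_ ((M.map (G.map (homOfLE hkl))).toFunctor.obj ((M.map (G.map (homOfLE hjk))).toFunctor.obj (Y hij)))
        ((M.map (G.map (homOfLE hkl))).toFunctor.obj (Y hjk)) (Y hkl)).hom ≫
      (((M.map (G.map (homOfLE hkl))).toFunctor.obj ((M.map (G.map (homOfLE hjk))).toFunctor.obj (Y hij))) ◁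
        f hjk hkl) ≫
      (eqToHom (tfun_comp_obj M G hjk hkl (Y hij)) ▷ Y (hjk.trans hkl)) ≫
      f hij (hjk.trans hkl)

namespace TwoCocycle

variable {M : Iᵒᵖ ⥤ Cat.{0, 0}} [∀ x, MonoidalCategory (M.obj x)]
  [∀ (x y : Iᵒᵖ) (f : x ⟶ y), (M.map f).toFunctor.Monoidal]

/-- Precomposition (pullback) of a 2-cocycle along a monotone map. -/
def pull {m n : ℕ} (α : Fin (m + 1) →o Fin (n + 1)) {G : Fin (n + 1) ⥤ Iᵒᵖ}
    (c : TwoCocycle M G) : TwoCocycle M (α.monotone.functor ⋙ G) where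
  Y h := c.Y (α.monotone h)
  f hij hjk := c.f (α.monotone hij) (α.monotone hjk)
  Y_unit i := c.Y_unit (α i)
  f_right _ := c.f_right _
  f_left _ := c.f_left _
  coh _ _ _ := c.coh _ _ _

end TwoCocycle

/-- The nerve of a diagram of monoidal categories,
`[n] ↦ ∐_{G : [n] → I} Z²([n], M ∘ G)`, is a well-defined simplicial set, with the
simplicial operators acting by precomposition on `G` and by pullback on the
2-cocycle. -/
theorem nerve_of_diagram_of_monoidal_categories
    (I : Type) [SmallCategory I] (M : Iᵒᵖ ⥤ Cat.{0, 0})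
    [∀ x, MonoidalCategory (M.obj x)]
    [∀ (x y : Iᵒᵖ) (f : x ⟶ y), (M.map f).toFunctor.Monoidal] :
    ∃ (N : SSet.{0})
      (e : ∀ n : ℕ, N.obj (op (SimplexCategory.mk n)) ≃
        Σ G : Fin (n + 1) ⥤ Iᵒᵖ, TwoCocycle M G),
      ∀ (m n : ℕ) (α : SimplexCategory.mk m ⟶ SimplexCategory.mk n)
        (x : N.obj (op (SimplexCategory.mk n))),
        ((e m) (N.map α.op x)).1 = α.toOrderHom.monotone.functor ⋙ ((e n) x).1 ∧
        HEq ((e m) (N.map α.op x)).2 (((e n) x).2.pull α.toOrderHom) := by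
  refine ⟨{ obj := fun x => Σ G : Fin (x.unop.len + 1) ⥤ Iᵒᵖ, TwoCocycle M G,
            map := fun f => TypeCat.ofHom fun s => ⟨f.unop.toOrderHom.monotone.functor ⋙ s.1,
              s.2.pull f.unop.toOrderHom⟩,
            map_id := ?_, map_comp := ?_ },
          fun n => Equiv.refl _, fun m n α x => ⟨rfl, HEq.rfl⟩⟩
  · intro x; rfl
  · intro x y z f g; rfl
end
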